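/- Let (T, A)_ω be a DL-Lite_core weighted knowledge base, k an integer, A a concept name, and a an individual name. Let Ā be a fresh concept name, T' = T ∪ {A ⊓ Ā ⊑ ⊥}, A' = A ∪ {A(a), Ā(a)}, and let ω' extend ω by assigning weight ∞ to the axiom A ⊓ Ā ⊑ ⊥ and to the assertion A(a), and weight 1 to the assertion Ā(a). Then (T, A)_ω ⊨_p^k A(a) if and only if (T', A')_{ω'} ⊭_c^{k+1} Ā(a). -/

import Mathlib

namespace DL

/-! ### Syntax -/

abbrev IndName := ℕ
abbrev CName := ℕ
abbrev RName := ℕ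

/-- Roles: role names and inverse roles. -/
inductive Role where
  | name : RName → Role
  | inv  : RName → Role
deriving DecidableEq

/-- `ALCHIO` concepts. -/
inductive Concept where
  | top  : Concept
  | bot  : Concept
  | atom : CName → Concept
  | nom  : IndName → Concept
  | neg  : Concept → Concept
  | conj : Concept → Concept → Concept
  | ex   : Role → Concept → Concept
deriving DecidableEq

/-- TBox axioms: concept inclusions and role inclusions. -/
inductive Axiom where
  | ci : Concept → Concept → Axiom
  | ri : Role → Role → Axiom
deriving DecidableEq

/-- ABox assertions. -/
inductive Assertion where
  | ca : CName → IndName → Assertion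
  | ra : RName → IndName → IndName → Assertion
deriving DecidableEq

/-! ### Interpretations -/

/-- A DL interpretation with domain a subset of a universe `U`.  Individual names are
interpreted via `indI` (under the standard names assumption, the individual names of the
ABox under consideration are interpreted "as themselves", i.e. injectively). -/
structure Interp (U : Type) where
  dom : Set U
  indI : IndName → U
  cI : CName → Set U
  rI : RName → Set (U × U)
  cI_sub : ∀ A, cI A ⊆ dom
  rI_sub : ∀ r p, p ∈ rI r → p.1 ∈ dom ∧ p.2 ∈ dom

variable {U : Type}

/-- Every individual name denotes an element of the domain. -/
def Interp.Proper (I : Interp U) : Prop := ∀ a, I.indI a ∈ I.dom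

def Role.interp (I : Interp U) : Role → Set (U × U)
  | Role.name r => I.rI r
  | Role.inv r  => {p | (p.2, p.1) ∈ I.rI r}

def Concept.interp (I : Interp U) : Concept → Set U
  | Concept.top => I.dom
  | Concept.bot => ∅
  | Concept.atom A => I.cI A
  | Concept.nom a => {I.indI a} ∩ I.dom
  | Concept.neg C => I.dom \ Concept.interp I C
  | Concept.conj C D => Concept.interp I C ∩ Concept.interp I D
  | Concept.ex r C => {d | ∃ e, (d, e) ∈ Role.interp I r ∧ e ∈ Concept.interp I C}

def Assertion.sat (I : Interp U) : Assertion → Prop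
  | Assertion.ca A a => I.indI a ∈ I.cI A
  | Assertion.ra r a b => (I.indI a, I.indI b) ∈ I.rI r

/-! ### Violations and cost -/

/-- Violations of a concept inclusion `C ⊑ D`. -/
def vioCI (I : Interp U) (C D : Concept) : Set U :=
  Concept.interp I C \ Concept.interp I D

/-- Violations of a role inclusion `r ⊑ s`. -/
def vioRI (I : Interp U) (r s : Role) : Set (U × U) :=
  Role.interp I r \ Role.interp I s

/-- The number of violations of an axiom. -/
noncomputable def Axiom.vioCount (I : Interp U) : Axiom → ℕ∞
  | Axiom.ci C D => (vioCI I C D).encard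
  | Axiom.ri r s => (vioRI I r s).encard

open Classical in
/-- The cost of an interpretation w.r.t. a weighted knowledge base `(T, A)` with weight
functions `wT` (on TBox axioms) and `wA` (on ABox assertions). -/
noncomputable def cost (T : Finset Axiom) (A : Finset Assertion)
    (wT : Axiom → ℕ∞) (wA : Assertion → ℕ∞) (I : Interp U) : ℕ∞ :=
  (∑ τ ∈ T, wT τ * Axiom.vioCount I τ) +
    ∑ α ∈ A, (if Assertion.sat I α then 0 else wA α)

/-! ### Queries -/

inductive Term where
  | var : ℕ → Term
  | ind : IndName → Term
deriving DecidableEq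

inductive QAtom where
  | ca : CName → Term → QAtom
  | ra : RName → Term → Term → QAtom
deriving DecidableEq

/-- A Boolean conjunctive query: a finite set of atoms, all of whose variables are
(implicitly) existentially quantified. -/
abbrev BCQ := Finset QAtom

def Term.eval (I : Interp U) (π : ℕ → U) : Term → U
  | Term.var v => π v
  | Term.ind a => I.indI a

def QAtom.sat (I : Interp U) (π : ℕ → U) : QAtom → Prop
  | QAtom.ca A t => Term.eval I π t ∈ I.cI A
  | QAtom.ra r t t' => (Term.eval I π t, Term.eval I π t') ∈ I.rI r

/-- Satisfaction of a BCQ in an interpretation. -/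
def satQ (I : Interp U) (q : BCQ) : Prop :=
  ∃ π : ℕ → U, (∀ v, π v ∈ I.dom) ∧ ∀ a ∈ q, QAtom.sat I π a

/-- An instance query is a BCQ with a single atom. -/
def IsIQ (q : BCQ) : Prop := ∃ a : QAtom, q = {a}

/-! ### Cost-based semantics -/

/-- `k`-satisfiability: some interpretation has cost at most `k`. -/
def ksat (T : Finset Axiom) (A : Finset Assertion)
    (wT : Axiom → ℕ∞) (wA : Assertion → ℕ∞) (k : ℕ) : Prop :=
  ∃ (U : Type) (I : Interp U), I.Proper ∧ cost T A wT wA I ≤ (k : ℕ∞)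

/-- `K ⊨ₚᵏ q`: some interpretation of cost at most `k` satisfies `q`. -/
def satP (T : Finset Axiom) (A : Finset Assertion)
    (wT : Axiom → ℕ∞) (wA : Assertion → ℕ∞) (k : ℕ) (q : BCQ) : Prop :=
  ∃ (U : Type) (I : Interp U), I.Proper ∧ cost T A wT wA I ≤ (k : ℕ∞) ∧ satQ I q

/-- `K ⊨꜀ᵏ q`: every interpretation of cost at most `k` satisfies `q`. -/
def satC (T : Finset Axiom) (A : Finset Assertion)
    (wT : Axiom → ℕ∞) (wA : Assertion → ℕ∞) (k : ℕ) (q : BCQ) : Prop :=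
  ∀ (U : Type) (I : Interp U), I.Proper → cost T A wT wA I ≤ (k : ℕ∞) → satQ I q

/-- The optimal cost of a weighted knowledge base. -/
noncomputable def optCost (T : Finset Axiom) (A : Finset Assertion)
    (wT : Axiom → ℕ∞) (wA : Assertion → ℕ∞) : ℕ∞ :=
  sInf {c : ℕ∞ | ∃ (U : Type) (I : Interp U), I.Proper ∧ cost T A wT wA I = c}

/-- `K ⊨ₚᵒᵖᵗ q`: some interpretation of optimal cost satisfies `q`. -/
noncomputable def satPopt (T : Finset Axiom) (A : Finset Assertion)
    (wT : Axiom → ℕ∞) (wA : Assertion → ℕ∞) (q : BCQ) : Prop :=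
  ∃ (U : Type) (I : Interp U), I.Proper ∧ cost T A wT wA I = optCost T A wT wA ∧ satQ I q

/-- `K ⊨꜀ᵒᵖᵗ q`: every interpretation of optimal cost satisfies `q`. -/
noncomputable def satCopt (T : Finset Axiom) (A : Finset Assertion)
    (wT : Axiom → ℕ∞) (wA : Assertion → ℕ∞) (q : BCQ) : Prop :=
  ∀ (U : Type) (I : Interp U), I.Proper → cost T A wT wA I = optCost T A wT wA → satQ I q

/-! ### Occurrences of symbols -/

def Role.base : Role → RName
  | Role.name r => r
  | Role.inv r => r

def Concept.cnames : Concept → Finset CName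
  | Concept.atom A => {A}
  | Concept.neg C => C.cnames
  | Concept.conj C D => C.cnames ∪ D.cnames
  | Concept.ex _ C => C.cnames
  | _ => ∅

def Concept.rnames : Concept → Finset RName
  | Concept.neg C => C.rnames
  | Concept.conj C D => C.rnames ∪ D.rnames
  | Concept.ex r C => insert r.base C.rnames
  | _ => ∅

def Concept.indNames : Concept → Finset IndName
  | Concept.nom a => {a}
  | Concept.neg C => C.indNames
  | Concept.conj C D => C.indNames ∪ D.indNames
  | Concept.ex _ C => C.indNames
  | _ => ∅

def Axiom.cnames : Axiom → Finset CName
  | Axiom.ci C D => C.cnames ∪ D.cnames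
  | Axiom.ri _ _ => ∅

def Axiom.rnames : Axiom → Finset RName
  | Axiom.ci C D => C.rnames ∪ D.rnames
  | Axiom.ri r s => {r.base, s.base}

def Axiom.indNames : Axiom → Finset IndName
  | Axiom.ci C D => C.indNames ∪ D.indNames
  | Axiom.ri _ _ => ∅

def Assertion.cnames : Assertion → Finset CName
  | Assertion.ca A _ => {A}
  | Assertion.ra _ _ _ => ∅

def Assertion.rnames : Assertion → Finset RName
  | Assertion.ca _ _ => ∅
  | Assertion.ra r _ _ => {r}

def Assertion.indNames : Assertion → Finset IndName
  | Assertion.ca _ a => {a}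
  | Assertion.ra _ a b => {a, b}

/-- The individual names occurring in an ABox. -/
def aboxInds (A : Finset Assertion) : Finset IndName := A.biUnion Assertion.indNames

/-- The individual names occurring in a KB. -/
def kbInds (T : Finset Axiom) (A : Finset Assertion) : Finset IndName :=
  T.biUnion Axiom.indNames ∪ aboxInds A

def Term.indNames : Term → Finset IndName
  | Term.var _ => ∅
  | Term.ind a => {a}

def QAtom.indNames : QAtom → Finset IndName
  | QAtom.ca _ t => t.indNames
  | QAtom.ra _ t t' => t.indNames ∪ t'.indNames

def QAtom.cnames : QAtom → Finset CName
  | QAtom.ca A _ => {A}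
  | QAtom.ra _ _ _ => ∅

def qInds (q : BCQ) : Finset IndName := q.biUnion QAtom.indNames

def qCnames (q : BCQ) : Finset CName := q.biUnion QAtom.cnames

/-! ### Sizes -/

def Concept.size : Concept → ℕ
  | Concept.top => 1
  | Concept.bot => 1
  | Concept.atom _ => 1
  | Concept.nom _ => 1
  | Concept.neg C => C.size + 1
  | Concept.conj C D => C.size + D.size + 1
  | Concept.ex _ C => C.size + 2

def Axiom.size : Axiom → ℕ
  | Axiom.ci C D => C.size + D.size + 1
  | Axiom.ri _ _ => 3

def Assertion.size : Assertion → ℕ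
  | Assertion.ca _ _ => 2
  | Assertion.ra _ _ _ => 3

def tboxSize (T : Finset Axiom) : ℕ := ∑ τ ∈ T, τ.size

def aboxSize (A : Finset Assertion) : ℕ := ∑ α ∈ A, α.size

/-! ### DL-Lite fragments -/

/-- Basic concepts: concept names and unqualified existential restrictions `∃r` (with a
possibly inverse role `r`), the latter rendered as `∃r.⊤`. -/
inductive IsBasic : Concept → Prop
  | atom (A : CName) : IsBasic (Concept.atom A)
  | ex (r : Role) : IsBasic (Concept.ex r Concept.top)

/-- A `DL-Lite_core` axiom: `B ⊑ C` or `B ⊓ C ⊑ ⊥` with `B, C` basic concepts. -/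
def IsCoreAxiom (τ : Axiom) : Prop :=
  (∃ B C, τ = Axiom.ci B C ∧ IsBasic B ∧ IsBasic C) ∨
  (∃ B C, τ = Axiom.ci (Concept.conj B C) Concept.bot ∧ IsBasic B ∧ IsBasic C)

def IsDLLiteCore (T : Finset Axiom) : Prop := ∀ τ ∈ T, IsCoreAxiom τ

/-- Concepts built from basic concepts using `¬`, `⊓` (and hence also `⊔`). -/
inductive IsBoolConcept : Concept → Prop
  | basic {C} : IsBasic C → IsBoolConcept C
  | neg {C} : IsBoolConcept C → IsBoolConcept (Concept.neg C)
  | conj {C D} : IsBoolConcept C → IsBoolConcept D → IsBoolConcept (Concept.conj C D)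

/-- A `DL-Lite_bool^H` axiom: a concept inclusion between Boolean combinations of basic
concepts, or a role inclusion. -/
def IsBoolHAxiom (τ : Axiom) : Prop :=
  (∃ C D, τ = Axiom.ci C D ∧ IsBoolConcept C ∧ IsBoolConcept D) ∨ (∃ r s, τ = Axiom.ri r s)

def IsDLLiteBoolH (T : Finset Axiom) : Prop := ∀ τ ∈ T, IsBoolHAxiom τ
section Aux

variable {U : Type}

lemma role_interp_eq (I J : Interp U) (hr : I.rI = J.rI) (r : Role) :
    Role.interp I r = Role.interp J r := by
  cases r <;> simp [Role.interp, hr]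

lemma concept_interp_eq (I J : Interp U) (hd : I.dom = J.dom) (hi : I.indI = J.indI)
    (hr : I.rI = J.rI) :
    ∀ C : Concept, (∀ B ∈ Concept.cnames C, I.cI B = J.cI B) →
      Concept.interp I C = Concept.interp J C := by
  intro C
  induction C with
  | top => intro _; simp [Concept.interp, hd]
  | bot => intro _; simp [Concept.interp]
  | atom B => intro h; simpa [Concept.interp] using h B (by simp [Concept.cnames])
  | nom b => intro _; simp [Concept.interp, hd, hi]
  | neg C ih =>
      intro h
      simp only [Concept.interp, hd, ih (fun B hB => h B (by simpa [Concept.cnames] using hB))]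
  | conj C D ihC ihD =>
      intro h
      simp only [Concept.interp,
        ihC (fun B hB => h B (by simp [Concept.cnames]; exact Or.inl hB)),
        ihD (fun B hB => h B (by simp [Concept.cnames]; exact Or.inr hB))]
  | ex r C ih =>
      intro h
      simp only [Concept.interp, role_interp_eq I J hr r,
        ih (fun B hB => h B (by simpa [Concept.cnames] using hB))]

lemma assertion_sat_eq (I J : Interp U) (hi : I.indI = J.indI) (hr : I.rI = J.rI)
    (α : Assertion) (h : ∀ B ∈ Assertion.cnames α, I.cI B = J.cI B) :
    Assertion.sat I α ↔ Assertion.sat J α := by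
  cases α with
  | ca B b => simp [Assertion.sat, hi, h B (by simp [Assertion.cnames])]
  | ra r b c => simp [Assertion.sat, hi, hr]

lemma axiom_vio_eq (I J : Interp U) (hd : I.dom = J.dom) (hi : I.indI = J.indI)
    (hr : I.rI = J.rI) (τ : Axiom) (h : ∀ B ∈ Axiom.cnames τ, I.cI B = J.cI B) :
    Axiom.vioCount I τ = Axiom.vioCount J τ := by
  cases τ with
  | ci C D =>
      simp only [Axiom.vioCount, vioCI,
        concept_interp_eq I J hd hi hr C (fun B hB => h B (by simp [Axiom.cnames]; exact Or.inl hB)),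
        concept_interp_eq I J hd hi hr D (fun B hB => h B (by simp [Axiom.cnames]; exact Or.inr hB))]
  | ri r s =>
      simp only [Axiom.vioCount, vioRI, role_interp_eq I J hr]

lemma sum_insert_zero {β : Type*} [DecidableEq β] {f : β → ℕ∞} {a : β} {s : Finset β}
    (h : f a = 0) : ∑ i ∈ insert a s, f i = ∑ i ∈ s, f i := by
  by_cases ha : a ∈ s
  · rw [Finset.insert_eq_self.2 ha]
  · rw [Finset.sum_insert ha, h, zero_add]

end Aux


lemma enat_add_one_le_cancel {a b : ℕ∞} (h : a + 1 ≤ b + 1) : a ≤ b := by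
  cases a using ENat.recTopCoe with
  | top =>
      cases b using ENat.recTopCoe with
      | top => exact le_refl _
      | coe n =>
          exfalso
          have h2 : ((n : ℕ∞) + 1) = ⊤ := top_le_iff.mp (by simpa using h)
          have h3 : ((n + 1 : ℕ) : ℕ∞) = ⊤ := by push_cast; exact h2
          exact (ENat.coe_ne_top (n + 1)) h3
  | coe m =>
      cases b using ENat.recTopCoe with
      | top => exact le_top
      | coe n =>
          have h' : ((m + 1 : ℕ) : ℕ∞) ≤ ((n + 1 : ℕ) : ℕ∞) := by push_cast; exact h
          have h'' : m + 1 ≤ n + 1 := by exact_mod_cast h'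
          exact_mod_cast Nat.le_of_succ_le_succ h'' 


/-- (Reduction of `IQAₚᵏ` to the complement of `IQA꜀ᵏ⁺¹`, concept
assertion query.)  Let `(T, A)_ω` be a `DL-Lite_core` WKB, `X` a concept name, `a` an
individual name, and `Xb` (`= Ā`) a fresh concept name.  With
`T' = T ∪ {X ⊓ Xb ⊑ ⊥}`, `A' = A ∪ {X(a), Xb(a)}`, weight `∞` on the new axiom and on
`X(a)`, and weight `1` on `Xb(a)`:
`(T,A)_ω ⊨ₚᵏ X(a)` iff `(T',A')_{ω'} ⊭꜀ᵏ⁺¹ Xb(a)`. -/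
theorem statement7 (T : Finset Axiom) (hcore : IsDLLiteCore T)
    (A : Finset Assertion) (wT : Axiom → ℕ∞) (wA : Assertion → ℕ∞)
    (hwT : ∀ τ ∈ T, 1 ≤ wT τ) (hwA : ∀ α ∈ A, 1 ≤ wA α)
    (k : ℕ) (X : CName) (a : IndName)
    (Xb : CName) (hXb : Xb ≠ X)
    (hXbT : ∀ τ ∈ T, Xb ∉ Axiom.cnames τ) (hXbA : ∀ α ∈ A, Xb ∉ Assertion.cnames α) :
    satP T A wT wA k {QAtom.ca X (Term.ind a)} ↔
      ¬ satC (insert (Axiom.ci (Concept.conj (Concept.atom X) (Concept.atom Xb)) Concept.bot) T)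
          (insert (Assertion.ca X a) (insert (Assertion.ca Xb a) A))
          (fun τ =>
            if τ = Axiom.ci (Concept.conj (Concept.atom X) (Concept.atom Xb)) Concept.bot then ⊤
            else wT τ)
          (fun α =>
            if α = Assertion.ca Xb a then 1
            else if α = Assertion.ca X a then ⊤
            else wA α)
          (k + 1) {QAtom.ca Xb (Term.ind a)} := by
  classical
  set τ0 : Axiom :=
    Axiom.ci (Concept.conj (Concept.atom X) (Concept.atom Xb)) Concept.bot with hτ0def
  set β1 : Assertion := Assertion.ca X a with hβ1def
  set β2 : Assertion := Assertion.ca Xb a with hβ2def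
  set wT' : Axiom → ℕ∞ := fun τ => if τ = τ0 then ⊤ else wT τ with hwT'def
  set wA' : Assertion → ℕ∞ :=
    fun α => if α = β2 then 1 else if α = β1 then ⊤ else wA α with hwA'def
  have hτ0T : τ0 ∉ T := fun h =>
    hXbT _ h (by simp [hτ0def, Axiom.cnames, Concept.cnames])
  have hβ2A : β2 ∉ A := fun h => hXbA _ h (by simp [hβ2def, Assertion.cnames])
  have hβ12 : β1 ≠ β2 := by
    simp only [hβ1def, hβ2def, ne_eq, Assertion.ca.injEq]
    exact fun h => hXb (h.1.symm)
  constructor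
  · rintro ⟨U, I, hP, hc, π, hπ, hq⟩
    have hX : I.indI a ∈ I.cI X := by
      have := hq _ (Finset.mem_singleton_self _)
      simpa [QAtom.sat, Term.eval] using this
    let I2 : Interp U :=
      { dom := I.dom, indI := I.indI,
        cI := fun B => if B = Xb then ∅ else I.cI B,
        rI := I.rI,
        cI_sub := by
          intro B
          split
          · simp
          · exact I.cI_sub B
        rI_sub := I.rI_sub }
    have hcIe : ∀ B, B ≠ Xb → I2.cI B = I.cI B := by
      intro B h; simp [I2, h]
    have hcIXb : I2.cI Xb = ∅ := by simp [I2]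
    have hP2 : I2.Proper := hP
    have hTsum : (∑ τ ∈ insert τ0 T, wT' τ * Axiom.vioCount I2 τ)
        = ∑ τ ∈ T, wT τ * Axiom.vioCount I τ := by
      rw [Finset.sum_insert hτ0T]
      have h0 : wT' τ0 * Axiom.vioCount I2 τ0 = 0 := by
        have : Axiom.vioCount I2 τ0 = 0 := by
          simp [hτ0def, Axiom.vioCount, vioCI, Concept.interp, hcIXb]
        rw [this, mul_zero]
      rw [h0, zero_add]
      refine Finset.sum_congr rfl (fun τ hτ => ?_)
      have hτne : τ ≠ τ0 := fun h => hτ0T (h ▸ hτ)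
      have hw : wT' τ = wT τ := by simp [hwT'def, hτne]
      have hv : Axiom.vioCount I2 τ = Axiom.vioCount I τ :=
        axiom_vio_eq I2 I rfl rfl rfl τ
          (fun B hB => hcIe B (fun h => hXbT τ hτ (h ▸ hB)))
      rw [hw, hv]
    have hsatβ1 : Assertion.sat I2 β1 := by
      have hXX : I2.cI X = I.cI X := hcIe X (fun h => hXb h.symm)
      show I2.indI a ∈ I2.cI X
      rw [hXX]
      exact hX
    have hAsum : (∑ α ∈ insert β1 (insert β2 A),
          (if Assertion.sat I2 α then 0 else wA' α))
        = 1 + ∑ α ∈ A, (if Assertion.sat I α then 0 else wA α) := by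
      rw [sum_insert_zero (by simp [hsatβ1]), Finset.sum_insert hβ2A]
      have h2 : (if Assertion.sat I2 β2 then 0 else wA' β2) = 1 := by
        have hns : ¬ Assertion.sat I2 β2 := by
          simp [hβ2def, Assertion.sat, hcIXb]
        simp [hns, hwA'def]
      rw [h2]
      congr 1
      refine Finset.sum_congr rfl (fun α hα => ?_)
      have hαβ2 : α ≠ β2 := fun h => hβ2A (h ▸ hα)
      by_cases hαβ1 : α = β1
      · subst hαβ1
        have hsI : Assertion.sat I β1 := by
          simpa [hβ1def, Assertion.sat] using hX
        simp [hsatβ1, hsI]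
      · have hw : wA' α = wA α := by simp [hwA'def, hαβ1, hαβ2]
        have hs : Assertion.sat I2 α ↔ Assertion.sat I α :=
          assertion_sat_eq I2 I rfl rfl α
            (fun B hB => hcIe B (fun h => hXbA α hα (h ▸ hB)))
        rw [hw]
        exact if_congr hs rfl rfl
    intro hC
    have hcost2 : cost (insert τ0 T) (insert β1 (insert β2 A)) wT' wA' I2
        ≤ ((k + 1 : ℕ) : ℕ∞) := by
      rw [cost, hTsum, hAsum]
      push_cast
      calc (∑ τ ∈ T, wT τ * Axiom.vioCount I τ)
            + (1 + ∑ α ∈ A, (if Assertion.sat I α then 0 else wA α))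
          = ((∑ τ ∈ T, wT τ * Axiom.vioCount I τ)
            + ∑ α ∈ A, (if Assertion.sat I α then 0 else wA α)) + 1 := by ring
        _ ≤ (k : ℕ∞) + 1 := add_le_add_left hc 1
    obtain ⟨π', hπ', hs⟩ := hC U I2 hP2 hcost2
    have := hs _ (Finset.mem_singleton_self _)
    simp [QAtom.sat, Term.eval, hcIXb] at this
  · intro h
    simp only [satC, not_forall] at h
    obtain ⟨U, I, hP, hc, hq⟩ := h
    have hnb : I.indI a ∉ I.cI Xb := by
      intro hmem
      exact hq ⟨fun _ => I.indI a, fun _ => hP a, by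
        intro atm hat
        rw [Finset.mem_singleton] at hat
        subst hat
        simpa [QAtom.sat, Term.eval] using hmem⟩
    have hX : I.indI a ∈ I.cI X := by
      by_contra hnx
      have hterm : (if Assertion.sat I β1 then 0 else wA' β1) = ⊤ := by
        have hns : ¬ Assertion.sat I β1 := by
          simpa [hβ1def, Assertion.sat] using hnx
        simp [hns, hwA'def, hβ12]
      have hmem : β1 ∈ insert β1 (insert β2 A) := Finset.mem_insert_self _ _
      have h1 : (⊤ : ℕ∞) ≤ ∑ α ∈ insert β1 (insert β2 A),
          (if Assertion.sat I α then 0 else wA' α) := by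
        calc (⊤ : ℕ∞) = (if Assertion.sat I β1 then 0 else wA' β1) := hterm.symm
          _ ≤ _ := Finset.single_le_sum
              (f := fun α => if Assertion.sat I α then 0 else wA' α)
              (fun i _ => zero_le) hmem
      have h2 : (⊤ : ℕ∞) ≤ cost (insert τ0 T) (insert β1 (insert β2 A)) wT' wA' I :=
        le_trans h1 (le_add_self)
      have hft := top_le_iff.mp (le_trans h2 hc)
      exact (ENat.coe_ne_top (k + 1)) hft
    have hsatβ1 : Assertion.sat I β1 := by
      simpa [hβ1def, Assertion.sat] using hX
    have hAsum : (∑ α ∈ insert β1 (insert β2 A),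
          (if Assertion.sat I α then 0 else wA' α))
        = 1 + ∑ α ∈ A, (if Assertion.sat I α then 0 else wA α) := by
      rw [sum_insert_zero (by simp [hsatβ1]), Finset.sum_insert hβ2A]
      have h2 : (if Assertion.sat I β2 then 0 else wA' β2) = 1 := by
        have hns : ¬ Assertion.sat I β2 := by
          simpa [hβ2def, Assertion.sat] using hnb
        simp [hns, hwA'def]
      rw [h2]
      congr 1
      refine Finset.sum_congr rfl (fun α hα => ?_)
      have hαβ2 : α ≠ β2 := fun h => hβ2A (h ▸ hα)
      by_cases hαβ1 : α = β1
      · subst hαβ1; simp [hsatβ1]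
      · simp [hwA'def, hαβ1, hαβ2]
    have hTsum : (∑ τ ∈ T, wT τ * Axiom.vioCount I τ)
        ≤ ∑ τ ∈ insert τ0 T, wT' τ * Axiom.vioCount I τ := by
      rw [Finset.sum_insert hτ0T]
      refine le_add_of_nonneg_of_le zero_le (le_of_eq ?_)
      refine Finset.sum_congr rfl (fun τ hτ => ?_)
      have hτne : τ ≠ τ0 := fun h => hτ0T (h ▸ hτ)
      simp [hwT'def, hτne]
    have hbound : cost T A wT wA I + 1 ≤ (k : ℕ∞) + 1 := by
      calc cost T A wT wA I + 1
          = (∑ τ ∈ T, wT τ * Axiom.vioCount I τ)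
            + (1 + ∑ α ∈ A, (if Assertion.sat I α then 0 else wA α)) := by
            rw [cost]; ring
        _ ≤ (∑ τ ∈ insert τ0 T, wT' τ * Axiom.vioCount I τ)
            + (∑ α ∈ insert β1 (insert β2 A),
                (if Assertion.sat I α then 0 else wA' α)) := by
            rw [hAsum]; exact add_le_add_left hTsum _
        _ = cost (insert τ0 T) (insert β1 (insert β2 A)) wT' wA' I := rfl
        _ ≤ ((k + 1 : ℕ) : ℕ∞) := hc
        _ = (k : ℕ∞) + 1 := by push_cast; ring
    refine ⟨U, I, hP, enat_add_one_le_cancel hbound, fun _ => I.indI a,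
      fun _ => hP a, ?_⟩
    intro atm hat
    rw [Finset.mem_singleton] at hat
    subst hat
    simpa [QAtom.sat, Term.eval] using hX


end DL
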